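/- Let D ⊂ ℂⁿ be a bounded convex domain and let {φ_j : 𝔻 → D} be a sequence of complex geodesics converging in the compact-open topology to a map φ : 𝔻 → closure(D). If there exists ζ₀ ∈ 𝔻 with φ(ζ₀) ∈ D, then φ(𝔻) ⊆ D and φ is a complex geodesic of D. -/

import Mathlib

open Metric Set Filter
open scoped ENNReal NNReal

noncomputable section

/-- The open unit disc in `ℂ`. -/
def uDisc : Set ℂ := Metric.ball 0 1

/-- The inverse hyperbolic tangent. -/
def artanh (x : ℝ) : ℝ := Real.log ((1 + x) / (1 - x)) / 2

/-- The Poincaré (hyperbolic) distance on the unit disc. -/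
def pDist (ζ η : ℂ) : ℝ :=
  artanh ‖(ζ - η) / (1 - (starRingEnd ℂ) ζ * η)‖

/-- Hyperbolic ball in the unit disc. -/
def hBall (z : ℂ) (r : ℝ) : Set ℂ := {w ∈ uDisc | pDist w z < r}

/-- Bloch radius of a subset of the unit disc. -/
def blochRadiusD (U : Set ℂ) : ℝ≥0∞ :=
  ⨆ (r : NNReal) (_ : ∃ z ∈ uDisc, hBall z (r : ℝ) ⊆ U), (r : ℝ≥0∞)

/-- `tanh` extended to `ℝ≥0∞`, with `tanh ∞ = 1`. -/
def tanhE (x : ℝ≥0∞) : ℝ := if x = ⊤ then 1 else Real.tanh x.toReal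

variable {E : Type*} [NormedAddCommGroup E] [NormedSpace ℂ E]

/-- Admissible values for the Lempert function of `D` between `z` and `w`. -/
def lemSet (D : Set E) (z w : E) : Set ℝ :=
  {c | ∃ (f : ℂ → E) (ζ : ℂ), DifferentiableOn ℂ f uDisc ∧ MapsTo f uDisc D ∧
    f 0 = z ∧ ζ ∈ uDisc ∧ f ζ = w ∧ c = pDist 0 ζ}

/-- The Kobayashi (pseudo)distance of `D`, defined via chains of analytic discs. -/
def kDist (D : Set E) (z w : E) : ℝ :=
  sInf {s | ∃ (m : ℕ) (p : ℕ → E), p 0 = z ∧ p m = w ∧ (∀ i, i ≤ m → p i ∈ D) ∧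
      s = ∑ i ∈ Finset.range m, sInf (lemSet D (p i) (p (i + 1)))}

/-- Kobayashi ball of center `z` and radius `r` in `D`. -/
def kBall (D : Set E) (z : E) (r : ℝ) : Set E := {w ∈ D | kDist D w z < r}

/-- Bloch radius of `X ⊆ D` with respect to the Kobayashi distance of `D`. -/
def blochRadius (D X : Set E) : ℝ≥0∞ :=
  ⨆ (r : NNReal) (_ : ∃ z ∈ D, kBall D z (r : ℝ) ⊆ X), (r : ℝ≥0∞)

/-- The Kobayashi infinitesimal (pseudo)metric of `D`. -/
def kMetric (D : Set E) (z v : E) : ℝ :=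
  sInf {c | ∃ (f : ℂ → E) (r : ℝ), DifferentiableOn ℂ f uDisc ∧ MapsTo f uDisc D ∧
    f 0 = z ∧ 0 < r ∧ deriv f 0 = r • v ∧ c = 1 / r}

/-- The hyperbolic Lipschitz constant `μ_D(X)` of `X` inside `D`. -/
def lipConst (D X : Set E) : ℝ :=
  sSup {t | ∃ z ∈ X, ∃ v : E, v ≠ 0 ∧ t = kMetric D z v / kMetric X z v}

/-- `comps f j = f j ∘ ⋯ ∘ f 0`, the iterated function system associated to `f`. -/
def comps (f : ℕ → E → E) : ℕ → E → E
  | 0 => f 0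
  | (j + 1) => f (j + 1) ∘ comps f j

/-- `F` is a limit, in the compact-open topology on `D`, of a subsequence of the
iterated function system associated to `f`. -/
def IFSLimit (D : Set E) (f : ℕ → E → E) (F : E → E) : Prop :=
  ∃ s : ℕ → ℕ, StrictMono s ∧
    TendstoLocallyUniformlyOn (fun j => comps f (s j)) F atTop D

/-- `X ⊆ D` is degenerate in `D`: every limit of every iterated function system of
holomorphic self-maps of `D` with image in `X` is constant. -/
def Degenerate (D X : Set E) : Prop :=
  ∀ f : ℕ → E → E, (∀ j, DifferentiableOn ℂ (f j) D ∧ MapsTo (f j) D X) →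
    ∀ F : E → E, IFSLimit D f F → ∃ c, ∀ z ∈ D, F z = c

/-- A complex geodesic of `D`: a holomorphic isometry from the Poincaré distance of
the unit disc to the Kobayashi distance of `D`. -/
def IsComplexGeodesic (D : Set E) (φ : ℂ → E) : Prop :=
  DifferentiableOn ℂ φ uDisc ∧ MapsTo φ uDisc D ∧
    ∀ ζ ∈ uDisc, ∀ η ∈ uDisc, kDist D (φ ζ) (φ η) = pDist ζ η

/-- A Lempert projection associated to the complex geodesic `φ`: a holomorphic
retraction of `D` onto `φ(𝔻)` with affine fibers. -/
def IsLempertProjection (D : Set E) (φ : ℂ → E) (ρ : E → E) : Prop :=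
  DifferentiableOn ℂ ρ D ∧ MapsTo ρ D (φ '' uDisc) ∧
    (∀ z ∈ D, ρ (ρ z) = ρ z) ∧ (∀ ζ ∈ uDisc, ρ (φ ζ) = φ ζ) ∧
    ∀ ζ ∈ uDisc, ∃ (L : E →ₗ[ℂ] ℂ) (c : ℂ), L ≠ 0 ∧
      {w ∈ D | ρ w = φ ζ} = {w ∈ D | L w = c}

/-- A Lempert projection device `(φ, ρ, ρ̃)`: a complex geodesic, an associated
Lempert projection, and the left inverse `ρ̃ = φ⁻¹ ∘ ρ`. -/
def IsLempertDevice (D : Set E) (φ : ℂ → E) (ρ : E → E) (ρt : E → ℂ) : Prop :=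
  IsComplexGeodesic D φ ∧ IsLempertProjection D φ ρ ∧
    ∀ z ∈ D, ρt z ∈ uDisc ∧ φ (ρt z) = ρ z

/-- `X` is 1-Bloch in `D`: there is `C > 0` such that for every Lempert projection
device, `ρ̃(X)` is contained in a Bloch subdomain of the disc of Bloch radius `< C`. -/
def OneBloch (D X : Set E) : Prop :=
  ∃ C > (0 : ℝ), ∀ (φ : ℂ → E) (ρ : E → E) (ρt : E → ℂ),
    IsLempertDevice D φ ρ ρt → ∃ U : Set ℂ, IsOpen U ∧ IsConnected U ∧ U ⊆ uDisc ∧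
      ρt '' X ⊆ U ∧ blochRadiusD U < ENNReal.ofReal C

/-- `X` is c-Bloch in `D`: there is `C > 0` such that for every Lempert projection
device, `ρ̃(X ∩ φ(𝔻))` is contained in a Bloch subdomain of Bloch radius `≤ C`. -/
def CBloch (D X : Set E) : Prop :=
  ∃ C > (0 : ℝ), ∀ (φ : ℂ → E) (ρ : E → E) (ρt : E → ℂ),
    IsLempertDevice D φ ρ ρt → ∃ U : Set ℂ, IsOpen U ∧ IsConnected U ∧ U ⊆ uDisc ∧
      ρt '' (X ∩ φ '' uDisc) ⊆ U ∧ blochRadiusD U ≤ ENNReal.ofReal C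


namespace Stmt8Aux

variable {E : Type*} [NormedAddCommGroup E] [NormedSpace ℂ E]

lemma artanh_nonneg {x : ℝ} (h0 : 0 ≤ x) (h1 : x < 1) : 0 ≤ artanh x := by
  have h2 : (1:ℝ) ≤ (1 + x) / (1 - x) := by
    rw [le_div_iff₀ (by linarith)]; linarith
  have := Real.log_nonneg h2
  unfold artanh; linarith

lemma artanh_le_two_mul {x : ℝ} (h0 : 0 ≤ x) (h1 : x ≤ 1/2) : artanh x ≤ 2 * x := by
  have hpos : (0:ℝ) < (1 + x) / (1 - x) := by
    apply div_pos <;> linarith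
  have hlog := Real.log_le_sub_one_of_pos hpos
  have h3 : (1 + x) / (1 - x) ≤ 1 + 4 * x := by
    rw [div_le_iff₀ (by linarith)]; nlinarith
  unfold artanh; linarith

lemma pDist_zero_coe (x : ℝ) : pDist 0 (x : ℂ) = artanh |x| := by
  simp [pDist]

lemma pDist_zero_nonneg {ζ : ℂ} (h : ζ ∈ uDisc) : 0 ≤ pDist 0 ζ := by
  have hζ : ‖ζ‖ < 1 := by
    have h' := mem_ball_zero_iff.1 h
    exact h'
  have : pDist 0 ζ = artanh ‖ζ‖ := by simp [pDist]
  rw [this]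
  exact artanh_nonneg (norm_nonneg ζ) hζ

lemma lemSet_nonneg {D : Set E} {z w : E} {c : ℝ} (hc : c ∈ lemSet D z w) : 0 ≤ c := by
  obtain ⟨f, ζ, -, -, -, hζ, -, rfl⟩ := hc
  exact pDist_zero_nonneg hζ

lemma sInf_lemSet_nonneg (D : Set E) (z w : E) : 0 ≤ sInf (lemSet D z w) :=
  Real.sInf_nonneg fun _ hc => lemSet_nonneg hc

/-- The set of chain-sums defining `kDist`. -/
def chains (D : Set E) (z w : E) : Set ℝ :=
  {s | ∃ (m : ℕ) (p : ℕ → E), p 0 = z ∧ p m = w ∧ (∀ i, i ≤ m → p i ∈ D) ∧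
      s = ∑ i ∈ Finset.range m, sInf (lemSet D (p i) (p (i + 1)))}

lemma kDist_eq (D : Set E) (z w : E) : kDist D z w = sInf (chains D z w) := rfl

lemma chains_nonneg {D : Set E} {z w : E} {s : ℝ} (hs : s ∈ chains D z w) : 0 ≤ s := by
  obtain ⟨m, p, -, -, -, rfl⟩ := hs
  exact Finset.sum_nonneg fun i _ => sInf_lemSet_nonneg D _ _

lemma bddBelow_chains (D : Set E) (z w : E) : BddBelow (chains D z w) :=
  ⟨0, fun _ hs => chains_nonneg hs⟩

lemma chains_nonempty {D : Set E} {z w : E} (hz : z ∈ D) (hw : w ∈ D) :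
    (chains D z w).Nonempty := by
  refine ⟨_, 1, fun i => if i = 0 then z else w, by simp, by simp, ?_, rfl⟩
  intro i hi
  by_cases h : i = 0 <;> simp [h, hz, hw]

lemma kDist_nonneg (D : Set E) (z w : E) : 0 ≤ kDist D z w :=
  Real.sInf_nonneg fun _ hs => chains_nonneg hs

lemma chains_add {D : Set E} {a b c : E} {s₁ s₂ : ℝ}
    (h1 : s₁ ∈ chains D a b) (h2 : s₂ ∈ chains D b c) : s₁ + s₂ ∈ chains D a c := by
  obtain ⟨m₁, p₁, hp₁0, hp₁m, hp₁D, rfl⟩ := h1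
  obtain ⟨m₂, p₂, hp₂0, hp₂m, hp₂D, rfl⟩ := h2
  refine ⟨m₁ + m₂, fun i => if i < m₁ then p₁ i else p₂ (i - m₁), ?_, ?_, ?_, ?_⟩
  · by_cases h : 0 < m₁
    · simp [h, hp₁0]
    · have hm : m₁ = 0 := by omega
      have : p₂ 0 = a := by rw [hp₂0, ← hp₁m, hm, hp₁0]
      simp [h, this]
  · have h : ¬ (m₁ + m₂ < m₁) := by omega
    simp [h, hp₂m]
  · intro i hi
    by_cases h : i < m₁
    · simpa [h] using hp₁D i (by omega)
    · simpa [h] using hp₂D (i - m₁) (by omega)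
  · rw [Finset.sum_range_add]
    congr 1
    · refine Finset.sum_congr rfl fun i hi => ?_
      have hi' : i < m₁ := Finset.mem_range.1 hi
      dsimp only
      by_cases h : i + 1 < m₁
      · rw [if_pos hi', if_pos h]
      · have hi1 : i + 1 = m₁ := by omega
        have hb2 : p₂ (i + 1 - m₁) = p₁ (i + 1) := by
          rw [hi1, Nat.sub_self, hp₂0, ← hp₁m]
        rw [if_pos hi', if_neg h, hb2]
    · refine Finset.sum_congr rfl fun i hi => ?_
      have h1 : ¬ (m₁ + i < m₁) := by omega
      have h2 : ¬ (m₁ + i + 1 < m₁) := by omega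
      have e1 : m₁ + i - m₁ = i := by omega
      have e2 : m₁ + i + 1 - m₁ = i + 1 := by omega
      dsimp only
      rw [if_neg h1, if_neg h2, e1, e2]

lemma kDist_triangle {D : Set E} {a b c : E} (ha : a ∈ D) (hb : b ∈ D) (hc : c ∈ D) :
    kDist D a c ≤ kDist D a b + kDist D b c := by
  rw [kDist_eq, kDist_eq, kDist_eq]
  have hne_ab := chains_nonempty (D := D) ha hb
  have hne_bc := chains_nonempty (D := D) hb hc
  have key : sInf (chains D a c) - sInf (chains D b c) ≤ sInf (chains D a b) := by
    refine le_csInf hne_ab fun s₁ h₁ => ?_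
    have h2 : sInf (chains D a c) - s₁ ≤ sInf (chains D b c) := by
      refine le_csInf hne_bc fun s₂ h₂ => ?_
      have := csInf_le (bddBelow_chains D a c) (chains_add h₁ h₂)
      linarith
    linarith
  linarith

lemma kDist_le_of_ball {D : Set E} {a b : E} {r : ℝ} (hr : 0 < r)
    (hball : ball a r ⊆ D) (hb : dist b a ≤ r / 2) :
    kDist D a b ≤ 2 * (dist b a / r) := by
  have haD : a ∈ D := hball (mem_ball_self hr)
  rcases eq_or_ne b a with rfl | hba
  · have h0 : kDist D b b ≤ 0 := by
      refine csInf_le (bddBelow_chains D b b) ⟨0, fun _ => b, rfl, rfl, ?_, by simp⟩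
      intro i _; exact haD
    simpa using h0
  · have hbD : b ∈ D := hball (mem_ball.2 (lt_of_le_of_lt hb (by linarith)))
    set d : ℝ := dist b a with hd
    have hd0 : 0 < d := dist_pos.2 hba
    set x : ℝ := d / r with hxdef
    have hx0 : 0 < x := div_pos hd0 hr
    have hx1 : x ≤ 1 / 2 := by
      rw [hxdef, div_le_div_iff₀ hr (by norm_num)]; linarith
    -- the affine analytic disc from a to b
    set v : E := b - a with hv
    have hvn : ‖v‖ = d := by rw [hv, hd, dist_eq_norm]
    set f : ℂ → E := fun lam => a + (lam * ((r / d : ℝ) : ℂ)) • v with hf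
    have hmem : pDist 0 (x : ℂ) ∈ lemSet D a b := by
      refine ⟨f, (x : ℂ), ?_, ?_, ?_, ?_, ?_, rfl⟩
      · intro z _
        exact (((differentiable_id.mul_const _).smul_const v).const_add a).differentiableAt.differentiableWithinAt
      · intro lam hlam
        have hlam1 : ‖lam‖ < 1 := mem_ball_zero_iff.1 hlam
        apply hball
        rw [mem_ball, hf]
        have : dist (a + (lam * ((r / d : ℝ) : ℂ)) • v) a = ‖lam‖ * (r / d) * d := by
          rw [dist_eq_norm, add_sub_cancel_left, norm_smul, hvn, norm_mul,
            Complex.norm_real, Real.norm_of_nonneg (le_of_lt (div_pos hr hd0))]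
        rw [this]
        have : ‖lam‖ * (r / d) * d = ‖lam‖ * r := by field_simp
        rw [this]
        calc ‖lam‖ * r < 1 * r := by
              exact mul_lt_mul_of_pos_right hlam1 hr
          _ = r := one_mul r
      · simp [hf]
      · rw [uDisc, mem_ball_zero_iff, Complex.norm_real, Real.norm_of_nonneg hx0.le]
        linarith
      · show a + ((x : ℂ) * ((r / d : ℝ) : ℂ)) • v = b
        have hone : x * (r / d) = 1 := by
          rw [hxdef, div_mul_div_comm, mul_comm]
          exact div_self (by positivity)
        have hone' : ((x : ℂ) * ((r / d : ℝ) : ℂ)) = 1 := by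
          rw [← Complex.ofReal_mul, hone, Complex.ofReal_one]
        rw [hone', one_smul, hv, add_sub_cancel]
    have h1 : sInf (lemSet D a b) ≤ artanh x := by
      have := csInf_le ⟨0, fun _ hc => lemSet_nonneg hc⟩ hmem
      rwa [pDist_zero_coe, abs_of_pos hx0] at this
    have h2 : kDist D a b ≤ sInf (lemSet D a b) := by
      refine csInf_le (bddBelow_chains D a b) ⟨1, fun i => if i = 0 then a else b, by simp,
        by simp, ?_, by simp⟩
      intro i hi
      by_cases h : i = 0 <;> simp [h, haD, hbD]
    have h3 := artanh_le_two_mul hx0.le hx1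
    calc kDist D a b ≤ artanh x := le_trans h2 h1
      _ ≤ 2 * x := h3
      _ = 2 * (dist b a / r) := by rw [hxdef, hd]

end Stmt8Aux


open Stmt8Aux in
/-- a limit of complex geodesics which meets `D` is a complex
geodesic of `D`. -/
theorem stmt8 {n : ℕ} (D : Set (EuclideanSpace ℂ (Fin n)))
    (hDo : IsOpen D) (hDb : Bornology.IsBounded D) (hDconv : Convex ℝ D)
    (φseq : ℕ → ℂ → EuclideanSpace ℂ (Fin n))
    (hgeo : ∀ j, IsComplexGeodesic D (φseq j))
    (φ : ℂ → EuclideanSpace ℂ (Fin n))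
    (hconv : TendstoLocallyUniformlyOn φseq φ atTop uDisc)
    (hcl : MapsTo φ uDisc (closure D))
    (ζ₀ : ℂ) (hζ₀ : ζ₀ ∈ uDisc) (hφζ₀ : φ ζ₀ ∈ D) :
    MapsTo φ uDisc D ∧ IsComplexGeodesic D φ := by
  have hUo : IsOpen uDisc := isOpen_ball
  have hφd : DifferentiableOn ℂ φ uDisc :=
    hconv.differentiableOn (Eventually.of_forall fun j => (hgeo j).1) hUo
  -- Step 1: φ maps the disc into D (maximum principle + Hahn–Banach separation)
  have hmaps : MapsTo φ uDisc D := by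
    intro ζ₁ hζ₁
    by_contra hnot
    obtain ⟨g, hg⟩ := geometric_hahn_banach_open_point hDconv hDo hnot
    set L : EuclideanSpace ℂ (Fin n) →L[ℂ] ℂ := g.extendTo𝕜' with hL
    have hre : ∀ z, (L z).re = g z := by
      intro z
      have h := g.extendTo𝕜'_apply_re (𝕜 := ℂ) z
      rw [RCLike.re_to_complex] at h
      exact h
    set F : ℂ → ℂ := fun lam => Complex.exp (L (φ lam)) with hF
    have hFd : DifferentiableOn ℂ F uDisc := by
      apply DifferentiableOn.cexp
      exact L.differentiable.comp_differentiableOn hφd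
    have hle : ∀ z ∈ closure D, g z ≤ g (φ ζ₁) := by
      intro z hz
      have hsub : closure D ⊆ {z | g z ≤ g (φ ζ₁)} :=
        closure_minimal (fun a ha => (hg a ha).le)
          (isClosed_le g.continuous continuous_const)
      exact hsub hz
    have hmax : IsMaxOn (norm ∘ F) uDisc ζ₁ := by
      intro lam hlam
      simp only [Function.comp_apply, hF, Complex.norm_exp,
        Set.mem_setOf_eq]
      exact Real.exp_le_exp.2 (by rw [hre, hre]; exact hle _ (hcl hlam))
    have heq := Complex.eqOn_of_isPreconnected_of_isMaxOn_norm
      (convex_ball (0 : ℂ) 1).isPreconnected isOpen_ball hFd hζ₁ hmax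
    have h0 : F ζ₀ = F ζ₁ := heq hζ₀
    have habs : Real.exp ((L (φ ζ₀)).re) = Real.exp ((L (φ ζ₁)).re) := by
      have h := congrArg (norm : ℂ → ℝ) h0
      simpa [hF, Complex.norm_exp] using h
    have hcontra : g (φ ζ₀) = g (φ ζ₁) := by
      have h := Real.exp_injective habs
      rwa [hre, hre] at h
    exact absurd hcontra (ne_of_lt (hg _ hφζ₀))
  refine ⟨hmaps, hφd, hmaps, ?_⟩
  -- Step 2: the isometry property passes to the limit
  intro ζ hζ η hη
  obtain ⟨rζ, hrζ, hbζ⟩ := Metric.isOpen_iff.1 hDo _ (hmaps hζ)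
  obtain ⟨rη, hrη, hbη⟩ := Metric.isOpen_iff.1 hDo _ (hmaps hη)
  have hptζ := hconv.tendsto_at hζ
  have hptη := hconv.tendsto_at hη
  have key : ∀ ε > (0 : ℝ), ∃ j : ℕ,
      kDist D (φ ζ) (φseq j ζ) ≤ ε ∧ kDist D (φseq j ζ) (φ ζ) ≤ ε ∧
      kDist D (φ η) (φseq j η) ≤ ε ∧ kDist D (φseq j η) (φ η) ≤ ε := by
    intro ε hε
    have hδζ : (0:ℝ) < min (rζ / 4) (ε * rζ / 8) := by
      apply lt_min (by linarith) (by positivity)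
    have hδη : (0:ℝ) < min (rη / 4) (ε * rη / 8) := by
      apply lt_min (by linarith) (by positivity)
    have hevζ := Metric.tendsto_nhds.1 hptζ _ hδζ
    have hevη := Metric.tendsto_nhds.1 hptη _ hδη
    obtain ⟨j, hjζ, hjη⟩ := (hevζ.and hevη).exists
    have hdζ1 : dist (φseq j ζ) (φ ζ) ≤ rζ / 4 := (lt_min_iff.1 hjζ).1.le
    have hdζ2 : dist (φseq j ζ) (φ ζ) ≤ ε * rζ / 8 := (lt_min_iff.1 hjζ).2.le
    have hdη1 : dist (φseq j η) (φ η) ≤ rη / 4 := (lt_min_iff.1 hjη).1.le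
    have hdη2 : dist (φseq j η) (φ η) ≤ ε * rη / 8 := (lt_min_iff.1 hjη).2.le
    have bound : ∀ (a b : EuclideanSpace ℂ (Fin n)) (r : ℝ), 0 < r → ball a r ⊆ D →
        dist b a ≤ r / 4 → dist b a ≤ ε * r / 8 →
        kDist D a b ≤ ε ∧ kDist D b a ≤ ε := by
      intro a b r hr hball hd1 hd2
      constructor
      · have h1 : kDist D a b ≤ 2 * (dist b a / r) :=
          kDist_le_of_ball hr hball (by linarith)
        have h2 : dist b a / r ≤ ε / 8 := by
          rw [div_le_iff₀ hr]; linarith [hd2]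
        linarith
      · have hball' : ball b (r / 2) ⊆ D := by
          intro w hw
          apply hball
          rw [mem_ball] at hw ⊢
          calc dist w a ≤ dist w b + dist b a := dist_triangle w b a
            _ < r / 2 + r / 4 := by linarith [hw]
            _ < r := by linarith
        have h1 : kDist D b a ≤ 2 * (dist a b / (r / 2)) :=
          kDist_le_of_ball (by linarith : (0:ℝ) < r / 2) hball'
            (by rw [dist_comm]; linarith : dist a b ≤ (r / 2) / 2)
        have h2 : dist a b / (r / 2) ≤ ε / 4 := by
          rw [div_le_iff₀ (by linarith : (0:ℝ) < r / 2), dist_comm]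
          nlinarith [hd2]
        linarith
    obtain ⟨h1, h2⟩ := bound (φ ζ) (φseq j ζ) rζ hrζ hbζ hdζ1 hdζ2
    obtain ⟨h3, h4⟩ := bound (φ η) (φseq j η) rη hrη hbη hdη1 hdη2
    exact ⟨j, h1, h2, h3, h4⟩
  have main : ∀ ε > (0 : ℝ),
      kDist D (φ ζ) (φ η) ≤ pDist ζ η + ε ∧ pDist ζ η ≤ kDist D (φ ζ) (φ η) + ε := by
    intro ε hε
    obtain ⟨j, hA, hB, hC, hD'⟩ := key (ε / 2) (by linarith)
    have hjζ : φseq j ζ ∈ D := (hgeo j).2.1 hζ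
    have hjη : φseq j η ∈ D := (hgeo j).2.1 hη
    have hgeq : kDist D (φseq j ζ) (φseq j η) = pDist ζ η := (hgeo j).2.2 ζ hζ η hη
    constructor
    · have t1 := kDist_triangle (hmaps hζ) hjζ (hmaps hη)
      have t2 := kDist_triangle hjζ hjη (hmaps hη)
      linarith [hgeq ▸ t2]
    · have t1 := kDist_triangle hjζ (hmaps hζ) hjη
      have t2 := kDist_triangle (hmaps hζ) (hmaps hη) hjη
      rw [hgeq] at t1
      linarith
  apply le_antisymm
  · by_contra hlt
    push_neg at hlt
    have := (main ((kDist D (φ ζ) (φ η) - pDist ζ η) / 2) (by linarith)).1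
    linarith
  · by_contra hlt
    push_neg at hlt
    have := (main ((pDist ζ η - kDist D (φ ζ) (φ η)) / 2) (by linarith)).2
    linarith
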